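/- The Lebesgue measure in ℝ⁵ of the set { (a, b₁, b₂, b₃, b₄) : bᵢ ≥ 0 for all i, bᵢ + b_j ≤ a for all i ≠ j, and 3a − (b₁ + b₂ + b₃ + b₄) ≤ 1 } equals 1/720. -/

import Mathlib

open MeasureTheory


lemma simplex_meas (n : ℕ) (s : ℝ) :
    MeasurableSet {x : Fin n → ℝ | (∀ i, 0 ≤ x i) ∧ ∑ i, x i ≤ s} := by
  have : {x : Fin n → ℝ | (∀ i, 0 ≤ x i) ∧ ∑ i, x i ≤ s}
      = (⋂ i, {x : Fin n → ℝ | 0 ≤ x i}) ∩ {x | ∑ i, x i ≤ s} := by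
    ext x; simp [Set.mem_iInter]
  rw [this]
  exact MeasurableSet.inter
    (MeasurableSet.iInter fun i => measurableSet_le measurable_const (measurable_pi_apply i))
    (measurableSet_le (Finset.measurable_sum _ fun i _ => measurable_pi_apply i) measurable_const)

lemma simplex_vol : ∀ (n : ℕ) (s : ℝ), 0 ≤ s →
    volume {x : Fin n → ℝ | (∀ i, 0 ≤ x i) ∧ ∑ i, x i ≤ s}
      = ENNReal.ofReal (s ^ n / n.factorial) := by
  intro n
  induction n with
  | zero =>
    intro s hs
    have : {x : Fin 0 → ℝ | (∀ i, 0 ≤ x i) ∧ ∑ i, x i ≤ s} = Set.univ := by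
      ext x; simp [hs]
    rw [this]
    simp [volume_pi, Measure.pi_univ]
  | succ n ih =>
    intro s hs
    have mp := volume_preserving_piFinSuccAbove (fun _ : Fin (n+1) => ℝ) 0
    set e := MeasurableEquiv.piFinSuccAbove (fun _ : Fin (n+1) => ℝ) 0 with he
    set B : Set (ℝ × (Fin n → ℝ)) :=
      {p | 0 ≤ p.1 ∧ (∀ i, 0 ≤ p.2 i) ∧ p.1 + ∑ i, p.2 i ≤ s} with hB
    have hBm : MeasurableSet B := by
      have : B = (Set.Ici (0:ℝ) ×ˢ Set.univ) ∩
          ((Set.univ ×ˢ ⋂ i, {x : Fin n → ℝ | 0 ≤ x i})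
            ∩ {p : ℝ × (Fin n → ℝ) | p.1 + ∑ i, p.2 i ≤ s}) := by
        ext p; simp [hB, Set.mem_iInter, and_assoc]
      rw [this]
      refine (measurableSet_Ici.prod MeasurableSet.univ).inter
        ((MeasurableSet.univ.prod (MeasurableSet.iInter fun i =>
          measurableSet_le measurable_const (measurable_pi_apply i))).inter
          (measurableSet_le (measurable_fst.add <| Finset.measurable_sum _ fun i _ =>
            (measurable_pi_apply i).comp measurable_snd) measurable_const))
    have hpre : {x : Fin (n+1) → ℝ | (∀ i, 0 ≤ x i) ∧ ∑ i, x i ≤ s} = e ⁻¹' B := by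
      ext x
      have hex : e x = (x 0, fun j => x j.succ) := by
        simp [he, MeasurableEquiv.piFinSuccAbove, Fin.insertNthEquiv, Fin.zero_succAbove]
        rfl
      simp only [Set.mem_setOf_eq, Set.mem_preimage, hex, hB, Fin.forall_fin_succ,
        Fin.sum_univ_succ]
      tauto
    rw [hpre, mp.measure_preimage hBm.nullMeasurableSet]
    rw [Measure.volume_eq_prod, Measure.prod_apply hBm]
    have hslice : ∀ t : ℝ, volume (Prod.mk t ⁻¹' B)
        = Set.indicator (Set.Icc 0 s) (fun t => ENNReal.ofReal ((s - t) ^ n / n.factorial)) t := by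
      intro t
      by_cases ht : t ∈ Set.Icc (0:ℝ) s
      · rw [Set.indicator_of_mem ht]
        have : Prod.mk t ⁻¹' B = {x : Fin n → ℝ | (∀ i, 0 ≤ x i) ∧ ∑ i, x i ≤ s - t} := by
          ext x; simp only [Set.mem_preimage, hB, Set.mem_setOf_eq]
          constructor
          · rintro ⟨_, h2, h3⟩; exact ⟨h2, by linarith⟩
          · rintro ⟨h2, h3⟩; exact ⟨ht.1, h2, by linarith⟩
        rw [this, ih (s - t) (by linarith [ht.2])]
      · rw [Set.indicator_of_notMem ht]
        have : Prod.mk t ⁻¹' B = ∅ := by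
          ext x; simp only [Set.mem_preimage, hB, Set.mem_setOf_eq, Set.mem_empty_iff_false,
            iff_false]
          rintro ⟨h1, h2, h3⟩
          have hsum : 0 ≤ ∑ i, x i := Finset.sum_nonneg fun i _ => h2 i
          simp only [Set.mem_Icc, not_and, not_le] at ht
          have := ht h1
          linarith
        simp [this]
    simp_rw [hslice]
    rw [lintegral_indicator measurableSet_Icc]
    have hcont : Continuous fun t : ℝ => (s - t) ^ n / n.factorial :=
      ((continuous_const.sub continuous_id).pow n).div_const _
    have hnn : 0 ≤ᵐ[volume.restrict (Set.Icc 0 s)]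
        fun t : ℝ => (s - t) ^ n / n.factorial := by
      refine (ae_restrict_iff' measurableSet_Icc).2 (Filter.Eventually.of_forall fun t ht => ?_)
      have : 0 ≤ s - t := by linarith [ht.2]
      positivity
    rw [← ofReal_integral_eq_lintegral_ofReal hcont.integrableOn_Icc hnn]
    congr 1
    rw [MeasureTheory.integral_Icc_eq_integral_Ioc, ← intervalIntegral.integral_of_le hs]
    rw [intervalIntegral.integral_div]
    have : (∫ t in (0:ℝ)..s, (s - t) ^ n) = ∫ t in (0:ℝ)..s, t ^ n := by
      rw [intervalIntegral.integral_comp_sub_left (fun t => t ^ n) s]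
      norm_num
    rw [this, integral_pow]
    rw [Nat.factorial_succ]
    push_cast
    field_simp
    simp

def rho (σ : Equiv.Perm (Fin 4)) : Equiv.Perm (Fin 5) where
  toFun := Fin.cons 0 (fun i => (σ i).succ)
  invFun := Fin.cons 0 (fun i => (σ⁻¹ i).succ)
  left_inv := by
    intro k
    induction k using Fin.cases with
    | zero => simp
    | succ i => simp
  right_inv := by
    intro k
    induction k using Fin.cases with
    | zero => simp
    | succ i => simp

@[simp] lemma rho_zero (σ : Equiv.Perm (Fin 4)) : rho σ 0 = 0 := rfl
@[simp] lemma rho_one (σ : Equiv.Perm (Fin 4)) : rho σ 1 = (σ 0).succ := rfl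
@[simp] lemma rho_two (σ : Equiv.Perm (Fin 4)) : rho σ 2 = (σ 1).succ := rfl
@[simp] lemma rho_three (σ : Equiv.Perm (Fin 4)) : rho σ 3 = (σ 2).succ := rfl
@[simp] lemma rho_four (σ : Equiv.Perm (Fin 4)) : rho σ 4 = (σ 3).succ := rfl

def Mmat : Matrix (Fin 5) (Fin 5) ℝ :=
  !![3,-3,-3,0,0; 0,2,-2,0,0; 0,0,4,-4,0; 0,0,0,3,-3; 0,0,0,0,2]

def Fmap : (Fin 5 → ℝ) →ₗ[ℝ] (Fin 5 → ℝ) := Matrix.toLin' Mmat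

def stdSimp : Set (Fin 5 → ℝ) := {x | (∀ i, 0 ≤ x i) ∧ ∑ i, x i ≤ 1}

lemma fmap_val (z : Fin 5 → ℝ) :
    Fmap z = ![3*z 0 - 3*z 1 - 3*z 2, 2*z 1 - 2*z 2, 4*z 2 - 4*z 3, 3*z 3 - 3*z 4, 2*z 4] := by
  funext k
  fin_cases k <;>
    simp [Fmap, Mmat, Matrix.toLin'_apply, Matrix.mulVec, dotProduct,
      Fin.sum_univ_five] <;> ring

lemma det_Fmap : LinearMap.det Fmap = 144 := by
  rw [Fmap, LinearMap.det_toLin']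
  simp [Mmat, Matrix.det_succ_row_zero, Fin.sum_univ_succ]
  norm_num

lemma memA_iff (σ : Equiv.Perm (Fin 4)) (y : Fin 5 → ℝ) :
    y ∘ ⇑(rho σ) ∈ Fmap ⁻¹' stdSimp ↔
      (0 ≤ y ((σ 3).succ) ∧ y ((σ 3).succ) ≤ y ((σ 2).succ) ∧
        y ((σ 2).succ) ≤ y ((σ 1).succ) ∧ y ((σ 1).succ) ≤ y ((σ 0).succ) ∧
        y ((σ 0).succ) + y ((σ 1).succ) ≤ y 0) ∧
      3 * y 0 - ∑ i : Fin 4, y i.succ ≤ 1 := by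
  have hsum : ∑ k : Fin 4, y ((σ k).succ) = ∑ i : Fin 4, y i.succ :=
    Equiv.sum_comp σ (fun i : Fin 4 => y i.succ)
  rw [Set.mem_preimage, fmap_val]
  simp only [stdSimp, Set.mem_setOf_eq, Fin.forall_fin_succ, Fin.sum_univ_five,
    Function.comp_apply, rho_zero, rho_one, rho_two, rho_three, rho_four,
    Matrix.cons_val_zero, Matrix.cons_val_one, Matrix.head_cons,
    Matrix.cons_val_two, Matrix.cons_val_three, Matrix.cons_val_four,
    Matrix.cons_val_succ, Matrix.vecTail, Matrix.vecHead, Function.comp]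
  constructor
  · rintro ⟨⟨h0, h1, h2, h3, h4, -⟩, hs⟩
    refine ⟨⟨by linarith, by linarith, by linarith, by linarith, by linarith⟩, ?_⟩
    rw [← hsum, Fin.sum_univ_four]; linarith
  · rintro ⟨⟨h0, h1, h2, h3, h4⟩, hs⟩
    rw [← hsum, Fin.sum_univ_four] at hs
    refine ⟨⟨by linarith, by linarith, by linarith, by linarith, by linarith, fun i => i.elim0⟩, ?_⟩
    linarith

-- hyperplane null
lemma hyper_null (a b : Fin 5) (hab : a ≠ b) :
    volume {y : Fin 5 → ℝ | y a = y b} = 0 := by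
  set p : Submodule ℝ (Fin 5 → ℝ) :=
    LinearMap.ker ((LinearMap.proj a : (Fin 5 → ℝ) →ₗ[ℝ] ℝ) - LinearMap.proj b) with hp
  have hset : {y : Fin 5 → ℝ | y a = y b} = (p : Set (Fin 5 → ℝ)) := by
    ext y
    simp [hp, LinearMap.mem_ker, sub_eq_zero]
  rw [hset]
  refine Measure.addHaar_submodule _ p ?_
  intro htop
  have hmem := Submodule.eq_top_iff'.mp htop (Pi.single a 1)
  simp only [hp, LinearMap.mem_ker, LinearMap.sub_apply, LinearMap.proj_apply] at hmem
  rw [Pi.single_eq_same, Pi.single_eq_of_ne (Ne.symm hab)] at hmem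
  norm_num at hmem

-- antitone from chain
lemma chain_anti {c : Fin 4 → ℝ} (h32 : c 3 ≤ c 2) (h21 : c 2 ≤ c 1) (h10 : c 1 ≤ c 0) :
    Antitone c := by
  intro k l hkl
  fin_cases k <;> fin_cases l <;>
    simp_all <;> linarith

lemma pair_le {c : Fin 4 → ℝ} (h32 : c 3 ≤ c 2) (h21 : c 2 ≤ c 1) (h10 : c 1 ≤ c 0)
    {k l : Fin 4} (hkl : k ≠ l) : c k + c l ≤ c 0 + c 1 := by
  fin_cases k <;> fin_cases l <;>
    simp_all <;> linarith


def Aset : Set (Fin 5 → ℝ) := Fmap ⁻¹' stdSimp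

def Asig (σ : Equiv.Perm (Fin 4)) : Set (Fin 5 → ℝ) :=
  (fun y : Fin 5 → ℝ => y ∘ ⇑(rho σ)) ⁻¹' Aset

lemma stdSimp_meas : MeasurableSet stdSimp := simplex_meas 5 1

lemma Aset_meas : MeasurableSet Aset :=
  stdSimp_meas.preimage (Fmap.continuous_of_finiteDimensional.measurable)

lemma Asig_meas (σ : Equiv.Perm (Fin 4)) : MeasurableSet (Asig σ) :=
  Aset_meas.preimage (measurable_pi_lambda _ fun j => measurable_pi_apply _)

lemma vol_stdSimp : volume stdSimp = ENNReal.ofReal (1/120) := by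
  have := simplex_vol 5 1 (by norm_num)
  rw [stdSimp, this]
  norm_num [Nat.factorial]

lemma vol_Aset : volume Aset = ENNReal.ofReal (1/144) * ENNReal.ofReal (1/120) := by
  rw [Aset, Measure.addHaar_preimage_linearMap volume
    (by rw [det_Fmap]; norm_num : LinearMap.det Fmap ≠ 0), det_Fmap, vol_stdSimp]
  rw [show |(144:ℝ)⁻¹| = 1/144 by rw [abs_of_pos] <;> norm_num]

lemma vol_Asig (σ : Equiv.Perm (Fin 4)) :
    volume (Asig σ) = ENNReal.ofReal (1/144) * ENNReal.ofReal (1/120) := by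
  have hcoe : ⇑(MeasurableEquiv.piCongrLeft (fun _ : Fin 5 => ℝ)
      ((rho σ : Equiv.Perm (Fin 5)).symm : Fin 5 ≃ Fin 5))
      = fun y : Fin 5 → ℝ => y ∘ ⇑(rho σ) := by
    funext y
    funext j
    rw [MeasurableEquiv.coe_piCongrLeft]
    conv_lhs => rw [show j = ((rho σ : Equiv.Perm (Fin 5)).symm) ((rho σ) j) from
      (Equiv.symm_apply_apply _ j).symm]
    exact Equiv.piCongrLeft_apply_apply _ _ _ _
  have mp := volume_measurePreserving_piCongrLeft (fun _ : Fin 5 => ℝ)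
    ((rho σ : Equiv.Perm (Fin 5)).symm : Fin 5 ≃ Fin 5)
  have : Asig σ = ⇑(MeasurableEquiv.piCongrLeft (fun _ : Fin 5 => ℝ)
      ((rho σ : Equiv.Perm (Fin 5)).symm : Fin 5 ≃ Fin 5)) ⁻¹' Aset := by
    rw [hcoe]; rfl
  rw [this, mp.measure_preimage Aset_meas.nullMeasurableSet, vol_Aset]

/-- The nef cone volume of the del Pezzo surface `S₄`: the Lebesgue measure in `ℝ⁵` of
`{(a, b₁, …, b₄) : bᵢ ≥ 0, bᵢ + b_j ≤ a (i ≠ j), 3a − Σbᵢ ≤ 1}` equals `1/720`. -/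
theorem nef_volume_S4 :
    volume {p : ℝ × (Fin 4 → ℝ) |
        (∀ i, 0 ≤ p.2 i) ∧
        (∀ i j : Fin 4, i ≠ j → p.2 i + p.2 j ≤ p.1) ∧
        3 * p.1 - (∑ i, p.2 i) ≤ 1} =
      ENNReal.ofReal (1 / 720) := by
  classical
  set S : Set (ℝ × (Fin 4 → ℝ)) := {p : ℝ × (Fin 4 → ℝ) |
        (∀ i, 0 ≤ p.2 i) ∧
        (∀ i j : Fin 4, i ≠ j → p.2 i + p.2 j ≤ p.1) ∧
        3 * p.1 - (∑ i, p.2 i) ≤ 1} with hS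
  have hSm : MeasurableSet S := by
    have : S = (⋂ i, {p : ℝ × (Fin 4 → ℝ) | 0 ≤ p.2 i}) ∩
        ((⋂ i, ⋂ j, ⋂ (_ : i ≠ j), {p : ℝ × (Fin 4 → ℝ) | p.2 i + p.2 j ≤ p.1}) ∩
          {p : ℝ × (Fin 4 → ℝ) | 3 * p.1 - ∑ i, p.2 i ≤ 1}) := by
      ext p
      simp only [hS, Set.mem_setOf_eq, Set.mem_inter_iff, Set.mem_iInter]
    rw [this]
    have m1 : MeasurableSet (⋂ i, {p : ℝ × (Fin 4 → ℝ) | 0 ≤ p.2 i}) :=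
      MeasurableSet.iInter fun i => measurableSet_le measurable_const
        (measurable_snd.eval)
    have m2 : MeasurableSet (⋂ i, ⋂ j, ⋂ (_ : i ≠ j),
        {p : ℝ × (Fin 4 → ℝ) | p.2 i + p.2 j ≤ p.1}) :=
      MeasurableSet.iInter fun i => MeasurableSet.iInter fun j =>
        MeasurableSet.iInter fun _ => measurableSet_le
          (((measurable_snd.eval : Measurable fun p : ℝ × (Fin 4 → ℝ) => p.2 i)).add
            ((measurable_snd.eval : Measurable fun p : ℝ × (Fin 4 → ℝ) => p.2 j))) measurable_fst
    have m3 : MeasurableSet {p : ℝ × (Fin 4 → ℝ) | 3 * p.1 - ∑ i, p.2 i ≤ 1} :=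
      measurableSet_le ((measurable_const.mul measurable_fst).sub
        (Finset.measurable_sum _ fun i _ => (measurable_snd.eval : Measurable fun p : ℝ × (Fin 4 → ℝ) => p.2 i)))
        measurable_const
    exact m1.inter (m2.inter m3)
  have mp5 := volume_preserving_piFinSuccAbove (fun _ : Fin 5 => ℝ) 0
  set e := MeasurableEquiv.piFinSuccAbove (fun _ : Fin 5 => ℝ) 0 with he
  have hepre : volume (⇑e ⁻¹' S) = volume S := mp5.measure_preimage hSm.nullMeasurableSet
  rw [← hepre]
  have hey : ∀ y : Fin 5 → ℝ, e y = (y 0, fun j => y j.succ) := by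
    intro y
    simp [he, MeasurableEquiv.piFinSuccAbove, Fin.insertNthEquiv, Fin.zero_succAbove]
    rfl
  have hset : ⇑e ⁻¹' S = ⋃ σ : Equiv.Perm (Fin 4), Asig σ := by
    ext y
    simp only [Set.mem_preimage, hey, hS, Set.mem_setOf_eq, Set.mem_iUnion]
    constructor
    · rintro ⟨h1, h2, h3⟩
      set b : Fin 4 → ℝ := fun i => y i.succ with hb
      set σ : Equiv.Perm (Fin 4) := (Fin.revPerm : Equiv.Perm (Fin 4)).trans (Tuple.sort b)
        with hσ
      have hmono := Tuple.monotone_sort b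
      have hσk : ∀ k : Fin 4, σ k = Tuple.sort b k.rev := fun k => rfl
      refine ⟨σ, (memA_iff σ y).2 ⟨⟨?_, ?_, ?_, ?_, ?_⟩, h3⟩⟩
      · rw [hσk 3, show (Fin.rev 3 : Fin 4) = 0 by decide]; exact h1 _
      · rw [hσk 3, hσk 2, show (Fin.rev 3 : Fin 4) = 0 by decide,
          show (Fin.rev 2 : Fin 4) = 1 by decide]
        exact hmono (by decide : (0 : Fin 4) ≤ 1)
      · rw [hσk 2, hσk 1, show (Fin.rev 2 : Fin 4) = 1 by decide,
          show (Fin.rev 1 : Fin 4) = 2 by decide]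
        exact hmono (by decide : (1 : Fin 4) ≤ 2)
      · rw [hσk 1, hσk 0, show (Fin.rev 1 : Fin 4) = 2 by decide,
          show (Fin.rev 0 : Fin 4) = 3 by decide]
        exact hmono (by decide : (2 : Fin 4) ≤ 3)
      · exact h2 (σ 0) (σ 1) (σ.injective.ne (by decide))
    · rintro ⟨σ, hy⟩
      obtain ⟨⟨h0, h1, h2, h3, h4⟩, hsum⟩ := (memA_iff σ y).1 hy
      set c : Fin 4 → ℝ := fun k => y ((σ k).succ) with hc
      have hanti : Antitone c := chain_anti (by exact h1) (by exact h2) (by exact h3)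
      have hch : ∀ k : Fin 4, 0 ≤ c k := fun k =>
        le_trans (by exact h0) (hanti (Fin.le_last k))
      have hpair : ∀ k l : Fin 4, k ≠ l → c k + c l ≤ y 0 := by
        intro k l hkl
        have := pair_le (c := c) h1 h2 h3 hkl
        simp only [hc] at this ⊢
        linarith
      refine ⟨?_, ?_, hsum⟩
      · intro i
        have : 0 ≤ c (σ.symm i) := hch _
        simpa [hc, Equiv.apply_symm_apply] using this
      · intro i j hij
        have hne : σ.symm i ≠ σ.symm j := fun h => hij (by
          have := congrArg σ h
          simpa [Equiv.apply_symm_apply] using this)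
        have := hpair _ _ hne
        simpa [hc, Equiv.apply_symm_apply] using this
  rw [hset]
  have hNnull : volume (⋃ i : Fin 4, ⋃ j : Fin 4,
      {y : Fin 5 → ℝ | i ≠ j ∧ y i.succ = y j.succ}) = 0 := by
    refine measure_iUnion_null fun i => measure_iUnion_null fun j => ?_
    by_cases hij : i = j
    · subst hij
      simp
    · refine measure_mono_null (fun y hy => hy.2) (hyper_null i.succ j.succ ?_)
      simpa [Fin.succ_inj] using hij
  have hdisj : Pairwise (Function.onFun (AEDisjoint volume) (fun σ => Asig σ)) := by
    intro σ τ hne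
    refine measure_mono_null ?_ hNnull
    rintro y ⟨hyσ, hyτ⟩
    obtain ⟨⟨hs0, hs1, hs2, hs3, hs4⟩, -⟩ := (memA_iff σ y).1 hyσ
    obtain ⟨⟨ht0, ht1, ht2, ht3, ht4⟩, -⟩ := (memA_iff τ y).1 hyτ
    by_contra hN
    simp only [Set.mem_iUnion, Set.mem_setOf_eq, not_exists, not_and] at hN
    set b : Fin 4 → ℝ := fun i => y i.succ with hb
    have hinj : Function.Injective b := by
      intro i j hbij
      by_contra hij
      exact hN i j hij hbij
    have haσ : Antitone (b ∘ ⇑σ) := chain_anti (by exact hs1) (by exact hs2) (by exact hs3)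
    have haτ : Antitone (b ∘ ⇑τ) := chain_anti (by exact ht1) (by exact ht2) (by exact ht3)
    have hsσ : StrictAnti (b ∘ ⇑σ) := haσ.strictAnti_of_injective (hinj.comp σ.injective)
    have hsτ : StrictAnti (b ∘ ⇑τ) := haτ.strictAnti_of_injective (hinj.comp τ.injective)
    have hrange : Set.range (b ∘ ⇑σ) = Set.range (b ∘ ⇑τ) := by
      rw [Set.range_comp, Set.range_comp, Set.range_eq_univ.2 σ.surjective,
        Set.range_eq_univ.2 τ.surjective]
    have heq : b ∘ ⇑σ = b ∘ ⇑τ := (StrictAnti.range_inj hsσ hsτ).1 hrange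
    exact hne (Equiv.ext fun k => hinj (congrFun heq k))
  rw [measure_iUnion₀ hdisj (fun σ => (Asig_meas σ).nullMeasurableSet)]
  simp only [vol_Asig]
  rw [tsum_fintype]
  rw [Finset.sum_const, Finset.card_univ, Fintype.card_perm]
  rw [← ENNReal.ofReal_mul (by norm_num)]
  rw [nsmul_eq_mul]
  rw [show (((Fintype.card (Fin 4)).factorial : ℕ) : ENNReal) = ENNReal.ofReal 24 by
    norm_num [Fintype.card_fin, Nat.factorial]]
  rw [← ENNReal.ofReal_mul (by norm_num)]
  norm_num
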